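/- arXiv:1611.10342 — 5 statements merged into one kernel-verified Lean document; each statement's English description precedes it below -/
import Mathlib

section
/- Every morphism h: τ → ρ in the Borisov–Manin category of graphs factors as h = c ∘ g where g: τ → σ is a grafting and c: σ → ρ is a compression, and this factorisation is unique up to unique isomorphism of the middle object. Equivalently, graftings and compressions form an orthogonal factorisation system on the Borisov–Manin category. -/
/-- A Borisov–Manin graph: a quadruple `(V, F, ∂, j)` of finite sets with
`∂ : F → V` and `j : F → F` an involution.  Fixpoints of `j` are *tails*;
2-element orbits of `j` are *edges*. -/
structure BMGraph where
  V : Type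
  F : Type
  fintV : Fintype V
  fintF : Fintype F
  decF : DecidableEq F
  bd : F → V
  j : F → F
  j_invol : ∀ f, j (j f) = f

attribute [instance] BMGraph.fintV BMGraph.fintF BMGraph.decF

/-- A Borisov–Manin morphism `τ → σ`: a triple `(h^F, h_V, j_h)` satisfying the
Borisov–Manin axioms.  The involution `j_h` is recorded as a total map on `F_τ`,
normalised to be the identity on the image of the flag map, and a fixpoint-free
involution on the complement, agreeing with `j_τ` on edges. -/
structure BMHom (τ σ : BMGraph) where
  flagMap : σ.F → τ.F
  vertexMap : τ.V → σ.V
  jh : τ.F → τ.F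
  flag_inj : Function.Injective flagMap
  vertex_surj : Function.Surjective vertexMap
  range_j_closed : ∀ f : σ.F, τ.j (flagMap f) ∈ Set.range flagMap
  compl_j_closed : ∀ g : τ.F, g ∉ Set.range flagMap → τ.j g ∉ Set.range flagMap
  jh_range : ∀ g ∈ Set.range flagMap, jh g = g
  jh_compl : ∀ g, g ∉ Set.range flagMap → jh g ∉ Set.range flagMap
  jh_invol : ∀ g, jh (jh g) = g
  jh_nofix : ∀ g, g ∉ Set.range flagMap → jh g ≠ g
  jh_edge : ∀ g, g ∉ Set.range flagMap → τ.j g ≠ g → jh g = τ.j g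
  bd_comm : ∀ f : σ.F, vertexMap (τ.bd (flagMap f)) = σ.bd f
  contract_bd : ∀ g, g ∉ Set.range flagMap → vertexMap (τ.bd (jh g)) = vertexMap (τ.bd g)
  edges_to_edges : ∀ f f' : σ.F, τ.j (flagMap f) = flagMap f' → flagMap f ≠ flagMap f' → σ.j f = f'

/-- A grafting: both the vertex map and the flag map are bijective. -/
def IsGrafting {τ σ : BMGraph} (h : BMHom τ σ) : Prop :=
  Function.Bijective h.flagMap ∧ Function.Bijective h.vertexMap

/-- A compression: the flag map restricts to a bijection from the tails of the
codomain graph onto the tails of the domain graph. -/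
def IsCompression {τ σ : BMGraph} (h : BMHom τ σ) : Prop :=
  (∀ f : σ.F, σ.j f = f → τ.j (h.flagMap f) = h.flagMap f) ∧
  (∀ g : τ.F, τ.j g = g → ∃ f : σ.F, σ.j f = f ∧ h.flagMap f = g)

/-- `IsCompositeOf k g c` expresses that `k : τ → ρ` is the Borisov–Manin
composite of `g : τ → σ` followed by `c : σ → ρ`: the flag map is `g^F ∘ c^F`,
the vertex map is `c_V ∘ g_V`, and the involution of `k` is `j_g` on the
complement of `g^F` and `j_c` (transported along `g^F`) on the complement of
`c^F`. -/
def IsCompositeOf {τ σ ρ : BMGraph} (k : BMHom τ ρ) (g : BMHom τ σ) (c : BMHom σ ρ) : Prop :=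
  (∀ f, k.flagMap f = g.flagMap (c.flagMap f)) ∧
  (∀ v, k.vertexMap v = c.vertexMap (g.vertexMap v)) ∧
  (∀ x, x ∉ Set.range g.flagMap → k.jh x = g.jh x) ∧
  (∀ f, f ∉ Set.range c.flagMap → k.jh (g.flagMap f) = g.flagMap (c.jh f))

/-- An isomorphism of BM graphs realised as a morphism: a structure-preserving
bijection. -/
def IsIso {σ σ' : BMGraph} (m : BMHom σ σ') : Prop :=
  Function.Bijective m.flagMap ∧ Function.Bijective m.vertexMap ∧
  (∀ f, σ.j (m.flagMap f) = m.flagMap (σ'.j f))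

open Classical in
/-- The involution of the middle graph of the factorisation of `h`. -/
noncomputable def midJ {τ ρ : BMGraph} (h : BMHom τ ρ) (x : τ.F) : τ.F :=
  if hx : x ∈ Set.range h.flagMap then h.flagMap (ρ.j hx.choose) else h.jh x

lemma midJ_range {τ ρ : BMGraph} (h : BMHom τ ρ) (a : ρ.F) :
    midJ h (h.flagMap a) = h.flagMap (ρ.j a) := by
  have hx : h.flagMap a ∈ Set.range h.flagMap := ⟨a, rfl⟩
  have hch : hx.choose = a := h.flag_inj hx.choose_spec
  simp only [midJ, dif_pos hx, hch]

lemma midJ_compl {τ ρ : BMGraph} (h : BMHom τ ρ) (x : τ.F)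
    (hx : x ∉ Set.range h.flagMap) : midJ h x = h.jh x := dif_neg hx

lemma midJ_invol {τ ρ : BMGraph} (h : BMHom τ ρ) (x : τ.F) :
    midJ h (midJ h x) = x := by
  by_cases hx : x ∈ Set.range h.flagMap
  · obtain ⟨a, rfl⟩ := hx
    rw [midJ_range, midJ_range, ρ.j_invol]
  · rw [midJ_compl h x hx, midJ_compl h _ (h.jh_compl x hx), h.jh_invol]

/-- The middle graph of the grafting/compression factorisation of `h`. -/
noncomputable def midGraph {τ ρ : BMGraph} (h : BMHom τ ρ) : BMGraph where
  V := τ.V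
  F := τ.F
  fintV := τ.fintV
  fintF := τ.fintF
  decF := τ.decF
  bd := τ.bd
  j := midJ h
  j_invol := midJ_invol h

/-- The grafting part of the factorisation of `h`. -/
noncomputable def midGrafting {τ ρ : BMGraph} (h : BMHom τ ρ) :
    BMHom τ (midGraph h) where
  flagMap := id
  vertexMap := id
  jh := id
  flag_inj := fun _ _ hxy => hxy
  vertex_surj := fun v => ⟨v, rfl⟩
  range_j_closed := fun f => ⟨τ.j f, rfl⟩
  compl_j_closed := fun g hg => absurd ⟨g, rfl⟩ hg
  jh_range := fun _ _ => rfl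
  jh_compl := fun g hg => absurd ⟨g, rfl⟩ hg
  jh_invol := fun _ => rfl
  jh_nofix := fun g hg => absurd ⟨g, rfl⟩ hg
  jh_edge := fun g hg _ => absurd ⟨g, rfl⟩ hg
  bd_comm := fun _ => rfl
  contract_bd := fun g hg => absurd ⟨g, rfl⟩ hg
  edges_to_edges := by
    intro f f' hj hne
    simp only [id] at hj hne ⊢
    show midJ h f = f'
    by_cases hf : f ∈ Set.range h.flagMap
    · obtain ⟨a, rfl⟩ := hf
      obtain ⟨b, hb⟩ := h.range_j_closed a
      have hab : ρ.j a = b :=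
        h.edges_to_edges a b hb.symm (fun hh => hne (hh.trans (hb.trans hj)))
      rw [midJ_range, hab, hb, hj]
    · rw [midJ_compl h f hf, h.jh_edge f hf (by rw [hj]; exact fun hh => hne hh.symm), hj]

/-- The compression part of the factorisation of `h`. -/
noncomputable def midCompression {τ ρ : BMGraph} (h : BMHom τ ρ) :
    BMHom (midGraph h) ρ where
  flagMap := h.flagMap
  vertexMap := h.vertexMap
  jh := h.jh
  flag_inj := h.flag_inj
  vertex_surj := h.vertex_surj
  range_j_closed := fun f => by
    show midJ h (h.flagMap f) ∈ _
    rw [midJ_range]; exact ⟨ρ.j f, rfl⟩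
  compl_j_closed := fun g hg => by
    show midJ h g ∉ _
    rw [midJ_compl h g hg]; exact h.jh_compl g hg
  jh_range := h.jh_range
  jh_compl := h.jh_compl
  jh_invol := h.jh_invol
  jh_nofix := h.jh_nofix
  jh_edge := fun g hg _ => (midJ_compl h g hg).symm
  bd_comm := h.bd_comm
  contract_bd := h.contract_bd
  edges_to_edges := fun f f' hj hne => by
    have : midJ h (h.flagMap f) = h.flagMap f' := hj
    rw [midJ_range] at this
    exact h.flag_inj this

lemma BMHom.ext' {τ σ : BMGraph} {a b : BMHom τ σ}
    (h1 : a.flagMap = b.flagMap) (h2 : a.vertexMap = b.vertexMap)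
    (h3 : a.jh = b.jh) : a = b := by
  cases a; cases b; simp_all

/-- Structural properties shared by any grafting/compression factorisation. -/
lemma fact_props {τ ρ σ : BMGraph} {h : BMHom τ ρ} {g : BMHom τ σ} {c : BMHom σ ρ}
    (hg : IsGrafting g) (hc : IsCompression c) (hcomp : IsCompositeOf h g c) :
    (∀ a, σ.j (c.flagMap a) = c.flagMap (ρ.j a)) ∧
    (∀ x, x ∉ Set.range c.flagMap → g.flagMap (σ.j x) = h.jh (g.flagMap x)) ∧
    (∀ x, g.flagMap x ∈ Set.range h.flagMap ↔ x ∈ Set.range c.flagMap) ∧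
    (∀ x, x ∉ Set.range c.flagMap → σ.j x ≠ x) := by
  obtain ⟨h1, h2, h3, h4⟩ := hcomp
  have htail : ∀ x, x ∉ Set.range c.flagMap → σ.j x ≠ x := by
    intro x hx hjx
    obtain ⟨f, _, hf⟩ := hc.2 x hjx
    exact hx ⟨f, hf⟩
  refine ⟨?_, ?_, ?_, htail⟩
  · intro a
    by_cases hcase : σ.j (c.flagMap a) = c.flagMap a
    · obtain ⟨f, hjf, hf⟩ := hc.2 (c.flagMap a) hcase
      have : f = a := c.flag_inj hf
      rw [hcase, ← this, hjf]
    · obtain ⟨b, hb⟩ := c.range_j_closed a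
      have hab : ρ.j a = b := c.edges_to_edges a b hb.symm
        (fun hh => hcase (by rw [← hb, ← hh]))
      rw [← hb, hab]
  · intro x hx
    have hne := htail x hx
    have hjh : c.jh x = σ.j x := c.jh_edge x hx hne
    rw [← hjh, ← h4 x hx]
  · intro x
    constructor
    · rintro ⟨a, ha⟩
      rw [h1 a] at ha
      exact ⟨a, hg.1.1 ha⟩
    · rintro ⟨a, ha⟩
      exact ⟨a, by rw [h1 a, ha]⟩

/-- Every Borisov–Manin morphism `h : τ → ρ` factors as a
grafting `g : τ → σ` followed by a compression `c : σ → ρ`, and the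
factorisation is unique up to a unique isomorphism of the middle object:
graftings and compressions form an orthogonal factorisation system. -/
theorem grafting_compression_factorisation {τ ρ : BMGraph} (h : BMHom τ ρ) :
    (∃ (σ : BMGraph) (g : BMHom τ σ) (c : BMHom σ ρ),
      IsGrafting g ∧ IsCompression c ∧ IsCompositeOf h g c) ∧
    (∀ (σ σ' : BMGraph) (g : BMHom τ σ) (c : BMHom σ ρ)
       (g' : BMHom τ σ') (c' : BMHom σ' ρ),
      IsGrafting g → IsCompression c → IsCompositeOf h g c →
      IsGrafting g' → IsCompression c' → IsCompositeOf h g' c' →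
      ∃! m : BMHom σ σ',
        IsIso m ∧ IsCompositeOf g' g m ∧ IsCompositeOf c m c') := by
  constructor
  · -- existence
    refine ⟨midGraph h, midGrafting h, midCompression h, ?_, ?_, ?_⟩
    · exact ⟨Function.bijective_id, Function.bijective_id⟩
    · constructor
      · intro f hjf
        show midJ h (h.flagMap f) = h.flagMap f
        rw [midJ_range, hjf]
      · intro x hx
        by_cases hmem : x ∈ Set.range h.flagMap
        · obtain ⟨a, rfl⟩ := hmem
          refine ⟨a, ?_, rfl⟩
          have : midJ h (h.flagMap a) = h.flagMap a := hx
          rw [midJ_range] at this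
          exact h.flag_inj this
        · exfalso
          have : midJ h x = x := hx
          rw [midJ_compl h x hmem] at this
          exact h.jh_nofix x hmem this
    · refine ⟨fun _ => rfl, fun _ => rfl, ?_, ?_⟩
      · intro x hx
        exact absurd ⟨x, rfl⟩ hx
      · intro f _
        rfl
  · -- uniqueness
    intro σ σ' g c g' c' hg hc hcomp hg' hc' hcomp'
    obtain ⟨hA, hB, hR, hT⟩ := fact_props hg hc hcomp
    obtain ⟨hA', hB', hR', hT'⟩ := fact_props hg' hc' hcomp'
    have hGinj : Function.Injective g.flagMap := hg.1.1
    set eG : σ.F ≃ τ.F := Equiv.ofBijective g.flagMap hg.1 with heG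
    set eV : τ.V ≃ σ.V := Equiv.ofBijective g.vertexMap hg.2 with heV
    have hGsymm : ∀ x, g.flagMap (eG.symm x) = x := fun x => eG.apply_symm_apply x
    have hVsymm : ∀ v, g.vertexMap (eV.symm v) = v := fun v => eV.apply_symm_apply v
    have hVinv : ∀ w, eV.symm (g.vertexMap w) = w := fun w => eV.symm_apply_apply w
    -- the mediating maps
    set mflag : σ'.F → σ.F := fun f => eG.symm (g'.flagMap f) with hmflagdef
    set mvert : σ.V → σ'.V := fun v => g'.vertexMap (eV.symm v) with hmvertdef
    have hGm : ∀ f, g.flagMap (mflag f) = g'.flagMap f := fun f => hGsymm (g'.flagMap f)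
    have hmflag_inj : Function.Injective mflag :=
      fun a b hab => hg'.1.1 (by rw [← hGm a, ← hGm b, hab])
    have hmflag_surj : Function.Surjective mflag := by
      intro x
      obtain ⟨y, hy⟩ := hg'.1.2 (g.flagMap x)
      exact ⟨y, hGinj (by rw [hGm, hy])⟩
    have hmvert_surj : Function.Surjective mvert := by
      intro v
      obtain ⟨w, hw⟩ := hg'.2.2 v
      exact ⟨g.vertexMap w, by rw [hmvertdef]; simp only [hVinv]; exact hw⟩
    have hmvert_inj : Function.Injective mvert := by
      intro a b hab
      have := hg'.2.1 hab
      exact eV.symm.injective this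
    -- flag map compatibility with compressions
    have hcflag : ∀ a, mflag (c'.flagMap a) = c.flagMap a := by
      intro a
      apply hGinj
      rw [hGm, ← hcomp'.1 a, hcomp.1 a]
    -- mflag preserves complements of compression ranges
    have hmcompl : ∀ f, f ∉ Set.range c'.flagMap → mflag f ∉ Set.range c.flagMap := by
      intro f hf hmem
      apply hf
      rw [← hR']
      rw [← hGm f]
      exact (hR (mflag f)).2 hmem
    -- j-compatibility
    have hmj : ∀ f, σ.j (mflag f) = mflag (σ'.j f) := by
      intro f
      by_cases hf : f ∈ Set.range c'.flagMap
      · obtain ⟨a, rfl⟩ := hf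
        rw [hcflag a, hA a, hA' a, hcflag (ρ.j a)]
      · apply hGinj
        rw [hB (mflag f) (hmcompl f hf), hGm, hGm, hB' f hf]
    -- boundary compatibility
    have hbd : ∀ x : σ.F, σ.bd x = g.vertexMap (τ.bd (g.flagMap x)) := by
      intro x
      rw [← g.bd_comm x]
    have hbd' : ∀ x : σ'.F, σ'.bd x = g'.vertexMap (τ.bd (g'.flagMap x)) := by
      intro x
      rw [← g'.bd_comm x]
    have hmbd : ∀ f, mvert (σ.bd (mflag f)) = σ'.bd f := by
      intro f
      rw [hbd (mflag f), hGm f, hbd' f]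
      simp only [hmvertdef, hVinv]
    -- define m
    refine ⟨⟨mflag, mvert, id, hmflag_inj, hmvert_surj,
      fun f => ⟨σ'.j f, (hmj f).symm⟩,
      fun x hx => absurd (hmflag_surj x) hx,
      fun _ _ => rfl,
      fun x hx => absurd (hmflag_surj x) hx,
      fun _ => rfl,
      fun x hx => absurd (hmflag_surj x) hx,
      fun x hx => absurd (hmflag_surj x) hx,
      hmbd,
      fun x hx => absurd (hmflag_surj x) hx,
      fun f f' hj hne => hmflag_inj (by rw [← hmj f, hj])⟩, ?_, ?_⟩
    · refine ⟨⟨⟨hmflag_inj, hmflag_surj⟩, ⟨hmvert_inj, hmvert_surj⟩, hmj⟩, ?_, ?_⟩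
      · -- IsCompositeOf g' g m
        refine ⟨fun f => (hGm f).symm, ?_, ?_, ?_⟩
        · intro v
          show g'.vertexMap v = mvert (g.vertexMap v)
          rw [hmvertdef]; simp only [hVinv]
        · intro x hx
          exact absurd (hg.1.2 x) hx
        · intro f hf
          exact absurd (hmflag_surj f) hf
      · -- IsCompositeOf c m c'
        refine ⟨fun a => (hcflag a).symm, ?_, ?_, ?_⟩
        · intro v
          have hv : v = g.vertexMap (eV.symm v) := (hVsymm v).symm
          rw [hv, ← hcomp.2.1 (eV.symm v)]
          show h.vertexMap _ = c'.vertexMap (mvert (g.vertexMap (eV.symm v)))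
          rw [hmvertdef]
          simp only [hVinv]
          exact hcomp'.2.1 (eV.symm v)
        · intro x hx
          exact absurd (hmflag_surj x) hx
        · intro a ha
          show c.jh (mflag a) = mflag (c'.jh a)
          have h1 : c.jh (mflag a) = σ.j (mflag a) :=
            c.jh_edge (mflag a) (hmcompl a ha) (hT (mflag a) (hmcompl a ha))
          have h2 : c'.jh a = σ'.j a := c'.jh_edge a ha (hT' a ha)
          rw [h1, h2, hmj a]
    · -- uniqueness of m
      rintro m' ⟨hiso, hcg, hcc⟩
      apply BMHom.ext'
      · funext f
        apply hGinj
        show g.flagMap (m'.flagMap f) = g.flagMap (mflag f)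
        rw [hGm, ← hcg.1 f]
      · funext v
        have hv : v = g.vertexMap (eV.symm v) := (hVsymm v).symm
        show m'.vertexMap v = mvert v
        rw [hv, ← hcg.2.1 (eV.symm v), hmvertdef]
        simp only [hVinv]
      · funext x
        show m'.jh x = x
        exact m'.jh_range x (hiso.1.2 x)
end

section
/- In the Borisov–Manin category, the composite of two graftings is a grafting, and the composite of two compressions is a compression; moreover every isomorphism is both a grafting and a compression. Hence graftings and compressions each form a wide subcategory. -/
/-- The identity morphism of a BM graph. -/
def BMHom.id (τ : BMGraph) : BMHom τ τ where
  flagMap := fun f => f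
  vertexMap := fun v => v
  jh := fun f => f
  flag_inj := fun _ _ h => h
  vertex_surj := fun v => ⟨v, rfl⟩
  range_j_closed := fun f => ⟨τ.j f, rfl⟩
  compl_j_closed := fun g hg => absurd ⟨g, rfl⟩ hg
  jh_range := fun _ _ => rfl
  jh_compl := fun g hg => absurd ⟨g, rfl⟩ hg
  jh_invol := fun _ => rfl
  jh_nofix := fun g hg => absurd ⟨g, rfl⟩ hg
  jh_edge := fun g hg => absurd ⟨g, rfl⟩ hg
  bd_comm := fun _ => rfl
  contract_bd := fun g hg => absurd ⟨g, rfl⟩ hg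
  edges_to_edges := fun _ _ hj _ => hj

/-- Graftings and compressions are each closed under
composition, and every isomorphism is both a grafting and a compression.
Hence graftings and compressions each form a wide subcategory of the
Borisov–Manin category. -/
theorem graftings_compressions_wide_subcategories :
    (∀ (τ : BMGraph), IsGrafting (BMHom.id τ) ∧ IsCompression (BMHom.id τ)) ∧
    (∀ (τ σ ρ : BMGraph) (g : BMHom τ σ) (c : BMHom σ ρ) (k : BMHom τ ρ),
      IsCompositeOf k g c → IsGrafting g → IsGrafting c → IsGrafting k) ∧
    (∀ (τ σ ρ : BMGraph) (g : BMHom τ σ) (c : BMHom σ ρ) (k : BMHom τ ρ),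
      IsCompositeOf k g c → IsCompression g → IsCompression c → IsCompression k) ∧
    (∀ (τ σ : BMGraph) (m : BMHom τ σ), IsIso m → IsGrafting m ∧ IsCompression m) := by
  refine ⟨?_, ?_, ?_, ?_⟩
  · intro τ
    refine ⟨⟨Function.bijective_id, Function.bijective_id⟩, ?_, ?_⟩
    · intro f hf; exact hf
    · intro g hg; exact ⟨g, hg, rfl⟩
  · rintro τ σ ρ g c k ⟨hF, hV, -, -⟩ ⟨hgF, hgV⟩ ⟨hcF, hcV⟩
    constructor
    · have : k.flagMap = g.flagMap ∘ c.flagMap := funext hF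
      rw [this]; exact hgF.comp hcF
    · have : k.vertexMap = c.vertexMap ∘ g.vertexMap := funext hV
      rw [this]; exact hcV.comp hgV
  · rintro τ σ ρ g c k ⟨hF, -, -, -⟩ ⟨hg1, hg2⟩ ⟨hc1, hc2⟩
    constructor
    · intro f hf
      rw [hF f]
      exact hg1 _ (hc1 f hf)
    · intro x hx
      obtain ⟨f, hf, hfx⟩ := hg2 x hx
      obtain ⟨f', hf', hff'⟩ := hc2 f hf
      exact ⟨f', hf', by rw [hF, hff', hfx]⟩
  · rintro τ σ m ⟨hF, hV, hj⟩
    refine ⟨⟨hF, hV⟩, ?_, ?_⟩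
    · intro f hf; rw [hj, hf]
    · intro x hx
      obtain ⟨f, hf⟩ := hF.2 x
      refine ⟨f, hF.1 ?_, hf⟩
      rw [← hj, hf, hx]
end

section
/- There is an equivalence of categories Φ₁ between the wide subcategory of the Borisov–Manin category whose morphisms are the graftings, and the category of Joyal–Kock graphs without isolated edges with reduced covers (etale morphisms bijective on vertices) as morphisms. On objects, a BM graph (V, F, ∂, j) is sent to the JK graph with vertex set V, half-edge set H = F, arc set A = F + T (T the set of tails), s the inclusion, p = ∂, and involution i given by j on non-fixed flags and interchanging each tail with its copy in T. -/
/-- A Joyal–Kock graph: a diagram of finite sets `A ←s– H –p→ V` with `s`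
injective and a fixpoint-free involution `i` on the set of arcs `A`. -/
structure JKGraph where
  A : Type
  H : Type
  V : Type
  fintA : Fintype A
  fintH : Fintype H
  fintV : Fintype V
  decA : DecidableEq A
  decH : DecidableEq H
  s : H → A
  p : H → V
  i : A → A
  s_inj : Function.Injective s
  i_invol : ∀ a, i (i a) = a
  i_nofix : ∀ a, i a ≠ a

attribute [instance] JKGraph.fintA JKGraph.fintH JKGraph.fintV JKGraph.decA JKGraph.decH

/-- An etale morphism of JK graphs: a levelwise map commuting with `s`, `p`
and the involutions, such that the square on `H` and `V` is a pullback (each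
vertex maps to a vertex of the same valence). -/
structure Etale (G G' : JKGraph) where
  fA : G.A → G'.A
  fH : G.H → G'.H
  fV : G.V → G'.V
  comm_s : ∀ h, fA (G.s h) = G'.s (fH h)
  comm_p : ∀ h, fV (G.p h) = G'.p (fH h)
  comm_i : ∀ a, fA (G.i a) = G'.i (fA a)
  pullback : ∀ (h' : G'.H) (v : G.V), G'.p h' = fV v → ∃! h : G.H, G.p h = v ∧ fH h = h'

/-- `IsEComp e1 e2 e` expresses that `e` is the (levelwise) composite of the
etale morphisms `e1` followed by `e2`. -/
def IsEComp {G G' G'' : JKGraph} (e1 : Etale G G') (e2 : Etale G' G'') (e : Etale G G'') : Prop :=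
  (∀ a, e.fA a = e2.fA (e1.fA a)) ∧ (∀ h, e.fH h = e2.fH (e1.fH h)) ∧
  (∀ v, e.fV v = e2.fV (e1.fV v))

/-- The ports of a graph: the arcs not in the image of `s`. -/
def JKGraph.ports (G : JKGraph) : Set G.A := {a | a ∉ Set.range G.s}

/-- An edge (i-orbit) is isolated if neither of its arcs lies in the image of
`s`; `NoIsolated` says the graph has no isolated edges. -/
def NoIsolated (G : JKGraph) : Prop :=
  ∀ a : G.A, a ∈ Set.range G.s ∨ G.i a ∈ Set.range G.s

/-- A reduced cover: an etale morphism which is surjective on arcs (hence on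
edges) and bijective on vertices. -/
def IsReducedCover {R X : JKGraph} (e : Etale R X) : Prop :=
  Function.Bijective e.fV ∧ Function.Surjective e.fA

/-- The JK graph associated to a BM graph `(V, F, ∂, j)`: half-edges are the
flags, arcs are `F + T` (`T` the set of tails), `s` the inclusion, `p = ∂`,
and the involution is `j` on non-fixed flags while interchanging each tail
with its copy in `T`. -/
def toJK (τ : BMGraph) : JKGraph where
  A := τ.F ⊕ {f : τ.F // τ.j f = f}
  H := τ.F
  V := τ.V
  fintA := inferInstance
  fintH := τ.fintF
  fintV := τ.fintV
  decA := inferInstance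
  decH := τ.decF
  s := Sum.inl
  p := τ.bd
  i := fun a =>
    match a with
    | Sum.inl f => if h : τ.j f = f then Sum.inr ⟨f, h⟩ else Sum.inl (τ.j f)
    | Sum.inr t => Sum.inl t.val
  s_inj := fun _ _ h => Sum.inl_injective h
  i_invol := by
    rintro (f | t)
    · by_cases hf : τ.j f = f
      · simp [hf]
      · simp only [dif_neg hf]
        have : ¬ τ.j (τ.j f) = τ.j f := by
          rw [τ.j_invol]; intro h; exact hf h.symm
        simp only [dif_neg this, τ.j_invol]
        exact dif_neg fun h => hf h.symm
    · simp [t.prop]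
  i_nofix := by
    rintro (f | t) h
    · by_cases hf : τ.j f = f
      · simp [hf] at h
      · simp only [dif_neg hf] at h
        exact hf (Sum.inl_injective h)
    · simp at h

/-! ### Auxiliary machinery for the equivalence -/

section Auxiliary

lemma toJK_i_inl_tail (τ : BMGraph) (f : τ.F) (h : τ.j f = f) :
    (toJK τ).i (Sum.inl f) = Sum.inr ⟨f, h⟩ := by
  simp [toJK, h]

lemma toJK_i_inl_edge (τ : BMGraph) (f : τ.F) (h : τ.j f ≠ f) :
    (toJK τ).i (Sum.inl f) = Sum.inl (τ.j f) := by
  simp [toJK, h]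

lemma toJK_i_inr (τ : BMGraph) (t : {f : τ.F // τ.j f = f}) :
    (toJK τ).i (Sum.inr t) = Sum.inl t.val := rfl

lemma BMHom.ext'_s9 {τ σ : BMGraph} {g g' : BMHom τ σ}
    (h1 : g.flagMap = g'.flagMap) (h2 : g.vertexMap = g'.vertexMap)
    (h3 : g.jh = g'.jh) : g = g' := by
  cases g; cases g'; simp_all

lemma Etale.ext'_s9 {G G' : JKGraph} {e e' : Etale G G'}
    (h1 : e.fA = e'.fA) (h2 : e.fH = e'.fH) (h3 : e.fV = e'.fV) : e = e' := by
  cases e; cases e'; simp_all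

lemma etale_fA_inl {τ σ : BMGraph} (e : Etale (toJK τ) (toJK σ)) (f : τ.F) :
    e.fA (Sum.inl f) = Sum.inl (e.fH f) := e.comm_s f

lemma etale_fA_inr {τ σ : BMGraph} (e : Etale (toJK τ) (toJK σ))
    (t : {f : τ.F // τ.j f = f}) :
    e.fA (Sum.inr t) = (toJK σ).i (Sum.inl (e.fH t.val)) := by
  have h := e.comm_i (Sum.inr t)
  rw [toJK_i_inr, etale_fA_inl] at h
  have h2 := congrArg (toJK σ).i h
  rw [(toJK σ).i_invol] at h2
  exact h2.symm

/-- The inverse of the flag map of a grafting. -/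
noncomputable def graftInv {τ σ : BMGraph} (g : BMHom τ σ) (hg : IsGrafting g) :
    τ.F → σ.F :=
  Function.surjInv hg.1.2

lemma graftInv_right {τ σ : BMGraph} (g : BMHom τ σ) (hg : IsGrafting g) (x : τ.F) :
    g.flagMap (graftInv g hg x) = x :=
  Function.surjInv_eq hg.1.2 x

lemma graftInv_left {τ σ : BMGraph} (g : BMHom τ σ) (hg : IsGrafting g) (f : σ.F) :
    graftInv g hg (g.flagMap f) = f :=
  hg.1.1 (graftInv_right g hg (g.flagMap f))

/-- Tails of the codomain of a grafting pull back to tails. -/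
lemma graft_tail {τ σ : BMGraph} (g : BMHom τ σ) (hg : IsGrafting g)
    (t : σ.F) (ht : σ.j t = t) : τ.j (g.flagMap t) = g.flagMap t := by
  by_contra hne
  obtain ⟨f'', hf''⟩ := hg.1.2 (τ.j (g.flagMap t))
  have hj := g.edges_to_edges t f'' hf''.symm (by rw [hf'']; exact fun h => hne h.symm)
  rw [ht] at hj
  apply hne
  rw [← hj] at hf''
  exact hf''.symm

/-- The reduced cover of JK graphs associated to a grafting. -/
noncomputable def graftToEtale {τ σ : BMGraph} (g : BMHom τ σ) (hg : IsGrafting g) :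
    Etale (toJK τ) (toJK σ) where
  fA := Sum.elim (fun f => Sum.inl (graftInv g hg f))
    (fun t => (toJK σ).i (Sum.inl (graftInv g hg t.val)))
  fH := graftInv g hg
  fV := g.vertexMap
  comm_s := fun _ => rfl
  comm_p := fun h => by
    have hb := g.bd_comm (graftInv g hg h)
    rw [graftInv_right g hg h] at hb
    exact hb
  comm_i := by
    rintro (f | t)
    · by_cases hf : τ.j f = f
      · rw [toJK_i_inl_tail τ f hf]; rfl
      · rw [toJK_i_inl_edge τ f hf]
        have h1 : σ.j (graftInv g hg f) = graftInv g hg (τ.j f) := by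
          apply g.edges_to_edges
          · rw [graftInv_right, graftInv_right]
          · rw [graftInv_right, graftInv_right]
            exact fun h => hf h.symm
        have h2 : σ.j (graftInv g hg f) ≠ graftInv g hg f := by
          rw [h1]
          intro h
          apply hf
          have h3 := congrArg g.flagMap h
          rw [graftInv_right, graftInv_right] at h3
          exact h3
        show Sum.inl (graftInv g hg (τ.j f)) = (toJK σ).i (Sum.inl (graftInv g hg f))
        rw [toJK_i_inl_edge σ _ h2, h1]
    · rw [toJK_i_inr]
      show Sum.inl (graftInv g hg t.val)
          = (toJK σ).i ((toJK σ).i (Sum.inl (graftInv g hg t.val)))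
      exact ((toJK σ).i_invol _).symm
  pullback := by
    intro h' v hpv
    refine ⟨g.flagMap h', ⟨?_, graftInv_left g hg h'⟩, ?_⟩
    · apply hg.2.1
      exact (g.bd_comm h').trans hpv
    · rintro h₂ ⟨hb, hfH⟩
      have h3 := congrArg g.flagMap hfH
      rw [graftInv_right g hg h₂] at h3
      exact h3

lemma graftToEtale_rc {τ σ : BMGraph} (g : BMHom τ σ) (hg : IsGrafting g) :
    IsReducedCover (graftToEtale g hg) := by
  refine ⟨hg.2, ?_⟩
  rintro (f' | t')
  · exact ⟨Sum.inl (g.flagMap f'), by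
      show Sum.inl (graftInv g hg (g.flagMap f')) = Sum.inl f'
      rw [graftInv_left]⟩
  · refine ⟨Sum.inr ⟨g.flagMap t'.val, graft_tail g hg t'.val t'.prop⟩, ?_⟩
    show (toJK σ).i (Sum.inl (graftInv g hg (g.flagMap t'.val))) = Sum.inr t'
    rw [graftInv_left, toJK_i_inl_tail σ t'.val t'.prop]

lemma rc_fH_bij {τ σ : BMGraph} (e : Etale (toJK τ) (toJK σ)) (he : IsReducedCover e) :
    Function.Bijective e.fH := by
  constructor
  · intro h₁ h₂ hh
    have hb : τ.bd h₂ = τ.bd h₁ := by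
      apply he.1.1
      have p1 := e.comm_p h₁
      have p2 := e.comm_p h₂
      rw [hh] at p1
      exact p2.trans p1.symm
    obtain ⟨h, _, huniq⟩ := e.pullback (e.fH h₁) (τ.bd h₁) (e.comm_p h₁).symm
    exact (huniq h₁ ⟨rfl, rfl⟩).trans (huniq h₂ ⟨hb, hh.symm⟩).symm
  · intro h'
    obtain ⟨v, hv⟩ := he.1.2 ((toJK σ).p h')
    obtain ⟨h, ⟨_, hfh⟩, _⟩ := e.pullback h' v hv.symm
    exact ⟨h, hfh⟩

/-- The grafting associated to a reduced cover. -/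
noncomputable def etaleToGraft {τ σ : BMGraph} (e : Etale (toJK τ) (toJK σ))
    (he : IsReducedCover e) : BMHom τ σ where
  flagMap := Function.surjInv (rc_fH_bij e he).2
  vertexMap := e.fV
  jh := id
  flag_inj := Function.injective_surjInv (rc_fH_bij e he).2
  vertex_surj := he.1.2
  range_j_closed := fun f =>
    ⟨e.fH (τ.j (Function.surjInv (rc_fH_bij e he).2 f)),
      (rc_fH_bij e he).1 (Function.surjInv_eq (rc_fH_bij e he).2 _)⟩
  compl_j_closed := fun x hx => absurd
    ⟨e.fH x, (rc_fH_bij e he).1 (Function.surjInv_eq (rc_fH_bij e he).2 _)⟩ hx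
  jh_range := fun _ _ => rfl
  jh_compl := fun x hx => absurd
    ⟨e.fH x, (rc_fH_bij e he).1 (Function.surjInv_eq (rc_fH_bij e he).2 _)⟩ hx
  jh_invol := fun _ => rfl
  jh_nofix := fun x hx => absurd
    ⟨e.fH x, (rc_fH_bij e he).1 (Function.surjInv_eq (rc_fH_bij e he).2 _)⟩ hx
  jh_edge := fun x hx => absurd
    ⟨e.fH x, (rc_fH_bij e he).1 (Function.surjInv_eq (rc_fH_bij e he).2 _)⟩ hx
  bd_comm := fun f => by
    have hp := e.comm_p (Function.surjInv (rc_fH_bij e he).2 f)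
    rw [Function.surjInv_eq (rc_fH_bij e he).2 f] at hp
    exact hp
  contract_bd := fun x hx => absurd
    ⟨e.fH x, (rc_fH_bij e he).1 (Function.surjInv_eq (rc_fH_bij e he).2 _)⟩ hx
  edges_to_edges := by
    intro f f' hjf hne
    set fm : σ.F → τ.F := Function.surjInv (rc_fH_bij e he).2 with hfm
    have hxne : τ.j (fm f) ≠ fm f := by
      rw [hjf]; exact fun h => hne h.symm
    have h1 := e.comm_i (Sum.inl (fm f))
    erw [toJK_i_inl_edge τ _ hxne, etale_fA_inl, etale_fA_inl, hjf,
      Function.surjInv_eq (rc_fH_bij e he).2, Function.surjInv_eq (rc_fH_bij e he).2] at h1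
    by_cases hf : σ.j f = f
    · erw [toJK_i_inl_tail σ f hf] at h1
      exact absurd h1 (by simp)
    · erw [toJK_i_inl_edge σ f hf] at h1
      exact (Sum.inl_injective h1).symm

lemma etaleToGraft_flag_spec {τ σ : BMGraph} (e : Etale (toJK τ) (toJK σ))
    (he : IsReducedCover e) (f : σ.F) :
    e.fH ((etaleToGraft e he).flagMap f) = f :=
  Function.surjInv_eq (rc_fH_bij e he).2 f

lemma etaleToGraft_flag_left {τ σ : BMGraph} (e : Etale (toJK τ) (toJK σ))
    (he : IsReducedCover e) (h : τ.F) :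
    (etaleToGraft e he).flagMap (e.fH h) = h :=
  (rc_fH_bij e he).1 (etaleToGraft_flag_spec e he (e.fH h))

lemma etaleToGraft_grafting {τ σ : BMGraph} (e : Etale (toJK τ) (toJK σ))
    (he : IsReducedCover e) : IsGrafting (etaleToGraft e he) :=
  ⟨⟨Function.injective_surjInv (rc_fH_bij e he).2,
    fun x => ⟨e.fH x, etaleToGraft_flag_left e he x⟩⟩, he.1⟩

/-- The equivalence between graftings and reduced covers. -/
noncomputable def PhiEquiv (τ σ : BMGraph) :
    {g : BMHom τ σ // IsGrafting g} ≃ {e : Etale (toJK τ) (toJK σ) // IsReducedCover e} where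
  toFun := fun g => ⟨graftToEtale g.1 g.2, graftToEtale_rc g.1 g.2⟩
  invFun := fun e => ⟨etaleToGraft e.1 e.2, etaleToGraft_grafting e.1 e.2⟩
  left_inv := by
    rintro ⟨g, hg⟩
    apply Subtype.ext
    apply BMHom.ext'_s9
    · funext f
      have h1 : (graftToEtale g hg).fH
          ((etaleToGraft (graftToEtale g hg) (graftToEtale_rc g hg)).flagMap f) = f :=
        etaleToGraft_flag_spec _ _ f
      have h2 := congrArg g.flagMap h1
      rw [show (graftToEtale g hg).fH = graftInv g hg from rfl, graftInv_right] at h2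
      exact h2
    · rfl
    · funext x
      exact (g.jh_range x ⟨graftInv g hg x, graftInv_right g hg x⟩).symm
  right_inv := by
    rintro ⟨e, he⟩
    apply Subtype.ext
    have hfH : (graftToEtale (etaleToGraft e he) (etaleToGraft_grafting e he)).fH = e.fH := by
      funext h
      apply (etaleToGraft e he).flag_inj
      rw [etaleToGraft_flag_left e he h]
      exact graftInv_right (etaleToGraft e he) (etaleToGraft_grafting e he) h
    apply Etale.ext'_s9
    · funext a
      rcases a with f | t
      · rw [etale_fA_inl, etale_fA_inl, hfH]
      · rw [etale_fA_inr, etale_fA_inr, hfH]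
    · exact hfH
    · rfl

open Classical in
/-- The BM graph associated to a JK graph: flags are half-edges, `j` pairs
two half-edges whose arcs are interchanged by `i`. -/
noncomputable def fromJK (G : JKGraph) : BMGraph where
  V := G.V
  F := G.H
  fintV := G.fintV
  fintF := G.fintH
  decF := G.decH
  bd := G.p
  j := fun h => if hx : ∃ h', G.s h' = G.i (G.s h) then hx.choose else h
  j_invol := by
    intro h
    by_cases hx : ∃ h', G.s h' = G.i (G.s h)
    · simp only [dif_pos hx]
      have hb := hx.choose_spec
      have hx2 : ∃ h', G.s h' = G.i (G.s hx.choose) := ⟨h, by rw [hb, G.i_invol]⟩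
      simp only [dif_pos hx2]
      apply G.s_inj
      rw [hx2.choose_spec, hb, G.i_invol]
    · simp only [dif_neg hx]

open Classical in
lemma fromJK_j (G : JKGraph) (h : G.H) :
    (fromJK G).j h = if hx : ∃ h', G.s h' = G.i (G.s h) then hx.choose else h := rfl

noncomputable def fromJKEtale (G : JKGraph) : Etale (toJK (fromJK G)) G where
  fA := Sum.elim (fun h => G.s h) (fun t => G.i (G.s t.val))
  fH := id
  fV := id
  comm_s := fun _ => rfl
  comm_p := fun _ => rfl
  comm_i := by
    rintro (h | t)
    · by_cases hj : (fromJK G).j h = h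
      · rw [toJK_i_inl_tail _ h hj]; rfl
      · rw [toJK_i_inl_edge _ h hj]
        show G.s ((fromJK G).j h) = G.i (G.s h)
        by_cases hx : ∃ h', G.s h' = G.i (G.s h)
        · erw [fromJK_j G h, dif_pos hx]
          exact hx.choose_spec
        · exfalso
          apply hj
          erw [fromJK_j G h, dif_neg hx]
    · rw [toJK_i_inr]
      show G.s t.val = G.i (G.i (G.s t.val))
      rw [G.i_invol]
  pullback := fun h' v hpv => ⟨h', ⟨hpv, rfl⟩, fun y hy => hy.2⟩

lemma fromJKEtale_fA_bij (G : JKGraph) (hG : NoIsolated G) :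
    Function.Bijective (fromJKEtale G).fA := by
  constructor
  · have key : ∀ (h : G.H) (t : {f : (fromJK G).F // (fromJK G).j f = f}),
        G.s h ≠ G.i (G.s t.val) := by
      intro h t heq
      have hx : ∃ h', G.s h' = G.i (G.s t.val) := ⟨h, heq⟩
      have hp := t.prop
      erw [fromJK_j G t.val, dif_pos hx] at hp
      have h2 := hx.choose_spec
      rw [hp] at h2
      exact G.i_nofix _ h2.symm
    rintro (h₁ | t₁) (h₂ | t₂) heq
    · exact congrArg Sum.inl (G.s_inj heq)
    · exact absurd heq (key h₁ t₂)
    · exact absurd heq.symm (key h₂ t₁)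
    · have h1 : G.s t₁.val = G.s t₂.val := by
        have h2 : G.i (G.s t₁.val) = G.i (G.s t₂.val) := heq
        have h3 := congrArg G.i h2
        rwa [G.i_invol, G.i_invol] at h3
      exact congrArg Sum.inr (Subtype.ext (G.s_inj h1))
  · intro a
    by_cases ha : a ∈ Set.range G.s
    · obtain ⟨h, rfl⟩ := ha
      exact ⟨Sum.inl h, rfl⟩
    · rcases hG a with h | ⟨h, hh⟩
      · exact absurd h ha
      · have ht : (fromJK G).j h = h := by
          rw [fromJK_j, dif_neg]
          rintro ⟨h', hh'⟩
          apply ha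
          rw [hh, G.i_invol] at hh'
          exact ⟨h', hh'⟩
        exact ⟨Sum.inr ⟨h, ht⟩, by
          show G.i (G.s h) = a
          rw [hh, G.i_invol]⟩

end Auxiliary


/-- There is an equivalence `Φ₁` between the wide subcategory
of the BM category with only graftings, and the category of JK graphs without
isolated edges and reduced covers: on objects it is given by `toJK`, on
morphisms it is a bijection between graftings `τ → σ` and reduced covers
`toJK τ → toJK σ`, compatible with composition; moreover `toJK` lands in
graphs without isolated edges and is essentially surjective onto them. -/
theorem BM_graftings_equiv_reduced_covers :
    ∃ Φ : ∀ τ σ : BMGraph,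
      {g : BMHom τ σ // IsGrafting g} ≃ {e : Etale (toJK τ) (toJK σ) // IsReducedCover e},
      (∀ τ : BMGraph, NoIsolated (toJK τ)) ∧
      (∀ (τ σ ρ : BMGraph) (g : {g : BMHom τ σ // IsGrafting g})
         (g' : {g : BMHom σ ρ // IsGrafting g}) (k : BMHom τ ρ) (hk : IsGrafting k),
        IsCompositeOf k g.val g'.val →
        IsEComp (Φ τ σ g).val (Φ σ ρ g').val (Φ τ ρ ⟨k, hk⟩).val) ∧
      (∀ G : JKGraph, NoIsolated G → ∃ τ : BMGraph,
        ∃ e : Etale (toJK τ) G, Function.Bijective e.fA ∧ Function.Bijective e.fH ∧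
          Function.Bijective e.fV) := by
  refine ⟨PhiEquiv, ?_, ?_, ?_⟩
  · intro τ
    rintro (f | t)
    · exact Or.inl ⟨f, rfl⟩
    · exact Or.inr ⟨t.val, (toJK_i_inr τ t).symm⟩
  · intro τ σ ρ g g' k hk hcomp
    obtain ⟨hc1, hc2, -, -⟩ := hcomp
    have hH : ∀ h, graftInv k hk h = graftInv g'.1 g'.2 (graftInv g.1 g.2 h) := by
      intro h
      apply hk.1.1
      rw [graftInv_right k hk h, hc1, graftInv_right, graftInv_right]
    refine ⟨?_, hH, fun v => hc2 v⟩
    rintro (f | t)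
    · show Sum.inl (graftInv k hk f)
        = (graftToEtale g'.1 g'.2).fA (Sum.inl (graftInv g.1 g.2 f))
      rw [etale_fA_inl]
      show _ = Sum.inl (graftInv g'.1 g'.2 (graftInv g.1 g.2 f))
      rw [hH]
    · show (toJK ρ).i (Sum.inl (graftInv k hk t.val))
        = (graftToEtale g'.1 g'.2).fA ((toJK σ).i (Sum.inl (graftInv g.1 g.2 t.val)))
      rw [(graftToEtale g'.1 g'.2).comm_i (Sum.inl (graftInv g.1 g.2 t.val)),
        etale_fA_inl (graftToEtale g'.1 g'.2) (graftInv g.1 g.2 t.val)]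
      show _ = (toJK ρ).i (Sum.inl (graftInv g'.1 g'.2 (graftInv g.1 g.2 t.val)))
      rw [hH]
  · intro G hG
    exact ⟨fromJK G, fromJKEtale G, fromJKEtale_fA_bij G hG,
      Function.bijective_id, Function.bijective_id⟩
end

section
/- For a Joyal–Kock graph X without isolated edges, the reduced covers of X (up to isomorphism over X) are in order-preserving bijection with the subsets of the set of inner edges of X; in particular they form a Boolean lattice. -/
/-- The arcs belonging to inner edges: both the arc and its reverse are in the
image of `s`. -/
def innerArcs (X : JKGraph) : Set X.A :=
  {a | a ∈ Set.range X.s ∧ X.i a ∈ Set.range X.s}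

/-- The set of inner arcs of `X` cut by a cover `q : R → X`: those hit by an
arc of `R` which is a port (so the corresponding inner edge is hit twice). -/
def cutArcs {R X : JKGraph} (q : Etale R X) : Set X.A :=
  {a | a ∈ innerArcs X ∧ ∃ b : R.A, q.fA b = a ∧ b ∉ Set.range R.s}

section Aux

lemma JK_i_inj (G : JKGraph) : Function.Injective G.i := by
  intro a b h
  have h2 := congrArg G.i h
  rwa [G.i_invol, G.i_invol] at h2

variable {R R' X : JKGraph}

lemma fH_inj (q : Etale R X) (hV : Function.Bijective q.fV) :
    Function.Injective q.fH := by
  intro h1 h2 hh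
  have hp : R.p h1 = R.p h2 := by
    apply hV.1
    rw [q.comm_p, q.comm_p, hh]
  obtain ⟨h, _, huniq⟩ := q.pullback (q.fH h1) (R.p h1) (q.comm_p h1).symm
  have e1 := huniq h1 ⟨rfl, rfl⟩
  have e2 := huniq h2 ⟨hp.symm, hh.symm⟩
  rw [e1, e2]

lemma fH_surj (q : Etale R X) (hV : Function.Bijective q.fV) :
    Function.Surjective q.fH := by
  intro h'
  obtain ⟨v, hv⟩ := hV.2 (X.p h')
  obtain ⟨h, ⟨_, hh⟩, _⟩ := q.pullback h' v hv.symm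
  exact ⟨h, hh⟩

lemma srange_inj (q : Etale R X) (hV : Function.Bijective q.fV) {h1 h2 : R.H}
    (h : q.fA (R.s h1) = q.fA (R.s h2)) : h1 = h2 := by
  rw [q.comm_s, q.comm_s] at h
  exact fH_inj q hV (X.s_inj h)

lemma uncut_no_port (q : Etale R X) (hR : NoIsolated R) (hV : Function.Bijective q.fV)
    {h0 h1 : R.H} (hcl : R.i (R.s h0) = R.s h1) {b : R.A}
    (hb : b ∉ Set.range R.s) (hfb : q.fA b = q.fA (R.s h0)) : False := by
  obtain ⟨k, hk⟩ : R.i b ∈ Set.range R.s := (hR b).resolve_left hb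
  have hfk : q.fA (R.s k) = q.fA (R.s h1) := by
    rw [hk, q.comm_i, hfb, ← q.comm_i, hcl]
  have hk1 : k = h1 := srange_inj q hV hfk
  apply hb
  refine ⟨h0, ?_⟩
  have hb' : b = R.i (R.s h1) := by
    rw [← hk1, hk, R.i_invol]
  rw [hb', ← hcl, R.i_invol]

lemma uncut_edge (q : Etale R X) (hV : Function.Bijective q.fV)
    {a : X.A} (hnc : a ∉ cutArcs q) (hinner : a ∈ innerArcs X)
    {h0 h1 : R.H} (h0a : q.fA (R.s h0) = a) (h1a : q.fA (R.s h1) = X.i a) :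
    R.i (R.s h0) = R.s h1 := by
  have hc : q.fA (R.i (R.s h1)) = a := by rw [q.comm_i, h1a, X.i_invol]
  have hmem : R.i (R.s h1) ∈ Set.range R.s := by
    by_contra hport
    exact hnc ⟨hinner, _, hc, hport⟩
  obtain ⟨k, hk⟩ := hmem
  have hk0 : k = h0 := srange_inj q hV (by rw [hk, hc, h0a])
  rw [← hk0, hk, R.i_invol]

lemma cut_mono (q : Etale R X) (q' : Etale R' X) (hR' : NoIsolated R')
    (hqV : Function.Bijective q.fV) (hq'V : Function.Bijective q'.fV)
    (m : Etale R R') (hm : IsEComp m q' q) :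
    cutArcs q' ⊆ cutArcs q := by
  intro a ha
  obtain ⟨hinner, b', hb'a, hb'port⟩ := ha
  by_contra hnc
  obtain ⟨k0, hk0⟩ := hinner.1
  obtain ⟨k1, hk1⟩ := hinner.2
  obtain ⟨h0, hh0⟩ := fH_surj q hqV k0
  obtain ⟨h1, hh1⟩ := fH_surj q hqV k1
  have h0a : q.fA (R.s h0) = a := by rw [q.comm_s, hh0, hk0]
  have h1a : q.fA (R.s h1) = X.i a := by rw [q.comm_s, hh1, hk1]
  have hcl := uncut_edge q hqV hnc hinner h0a h1a
  have h0a' : q'.fA (R'.s (m.fH h0)) = a := by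
    rw [← m.comm_s, ← hm.1]; exact h0a
  have hcl' : R'.i (R'.s (m.fH h0)) = R'.s (m.fH h1) := by
    rw [← m.comm_s, ← m.comm_i, hcl, m.comm_s]
  exact uncut_no_port q' hR' hq'V hcl' hb'port (hb'a.trans h0a'.symm)

lemma JK_port_aux {R : JKGraph} (hR : NoIsolated R) {b : R.A}
    (hb : ¬∃ k, R.s k = b) : ∃ k, R.s k = R.i b :=
  (hR b).resolve_left hb

noncomputable def factorA (R R' : JKGraph) (hR : NoIsolated R) (fH : R.H → R'.H) :
    R.A → R'.A := fun a =>
  if h : ∃ k, R.s k = a then R'.s (fH h.choose)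
  else R'.i (R'.s (fH (JK_port_aux hR h).choose))

theorem factorA_s (R R' : JKGraph) (hR : NoIsolated R) (fH : R.H → R'.H) (h : R.H) :
    factorA R R' hR fH (R.s h) = R'.s (fH h) := by
  have hmem : ∃ k, R.s k = R.s h := ⟨h, rfl⟩
  unfold factorA
  rw [dif_pos hmem, R.s_inj hmem.choose_spec]

theorem factorA_port (R R' : JKGraph) (hR : NoIsolated R) (fH : R.H → R'.H) (b : R.A)
    (hb : ¬∃ k, R.s k = b) (k : R.H) (hk : R.s k = R.i b) :
    factorA R R' hR fH b = R'.i (R'.s (fH k)) := by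
  unfold factorA
  rw [dif_neg hb]
  have hc : (JK_port_aux hR hb).choose = k :=
    R.s_inj (by rw [(JK_port_aux hR hb).choose_spec, hk])
  rw [hc]

lemma exists_factor (q : Etale R X) (q' : Etale R' X)
    (hR : NoIsolated R) (hq : IsReducedCover q) (hq' : IsReducedCover q')
    (hsub : cutArcs q' ⊆ cutArcs q) : ∃ m : Etale R R', IsEComp m q' q := by
  obtain ⟨hqV, hqA⟩ := hq
  obtain ⟨hq'V, hq'A⟩ := hq'
  let eR : R.H ≃ X.H := Equiv.ofBijective q.fH ⟨fH_inj q hqV, fH_surj q hqV⟩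
  let eR' : R'.H ≃ X.H := Equiv.ofBijective q'.fH ⟨fH_inj q' hq'V, fH_surj q' hq'V⟩
  let eV : R.V ≃ X.V := Equiv.ofBijective q.fV hqV
  let eV' : R'.V ≃ X.V := Equiv.ofBijective q'.fV hq'V
  let fH : R.H → R'.H := fun h => eR'.symm (eR h)
  let fV : R.V → R'.V := fun v => eV'.symm (eV v)
  have hfH : ∀ h, q'.fH (fH h) = q.fH h := fun h => eR'.apply_symm_apply (eR h)
  have hfV : ∀ v, q'.fV (fV v) = q.fV v := fun v => eV'.apply_symm_apply (eV v)
  have key : ∀ (h k : R.H), R.s k = R.i (R.s h) → R'.s (fH k) = R'.i (R'.s (fH h)) := by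
    intro h k hk
    have hxa : q.fA (R.s h) ∈ Set.range X.s := ⟨q.fH h, (q.comm_s h).symm⟩
    have hxi : X.i (q.fA (R.s h)) = q.fA (R.s k) := by
      rw [hk, q.comm_i]
    have hinner : q.fA (R.s h) ∈ innerArcs X :=
      ⟨hxa, by rw [hxi]; exact ⟨q.fH k, (q.comm_s k).symm⟩⟩
    have hnc : q.fA (R.s h) ∉ cutArcs q := by
      rintro ⟨_, b, hb, hbport⟩
      exact uncut_no_port q hR hqV hk.symm hbport hb
    have hnc' : q.fA (R.s h) ∉ cutArcs q' := fun hc => hnc (hsub hc)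
    have e0 : q'.fA (R'.s (fH h)) = q.fA (R.s h) := by
      rw [q'.comm_s, hfH, ← q.comm_s]
    have e1 : q'.fA (R'.s (fH k)) = X.i (q.fA (R.s h)) := by
      rw [q'.comm_s, hfH, ← q.comm_s, ← hxi]
    exact (uncut_edge q' hq'V hnc' hinner e0 e1).symm
  refine ⟨⟨factorA R R' hR fH, fH, fV, ?_, ?_, ?_, ?_⟩, ?_, ?_, ?_⟩
  · exact factorA_s R R' hR fH
  · intro h
    apply hq'V.1
    rw [hfV, q.comm_p, q'.comm_p, hfH]
  · intro a
    by_cases ha : ∃ k, R.s k = a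
    · obtain ⟨h, rfl⟩ := ha
      by_cases hia : ∃ k, R.s k = R.i (R.s h)
      · obtain ⟨k, hk⟩ := hia
        rw [← hk, factorA_s, factorA_s]
        exact key h k hk
      · rw [factorA_port R R' hR fH _ hia h (R.i_invol (R.s h)).symm, factorA_s]
    · obtain ⟨k, hk⟩ := JK_port_aux hR ha
      rw [factorA_port R R' hR fH a ha k hk, R'.i_invol, ← hk, factorA_s]
  · intro h' v hpv
    refine ⟨eR.symm (eR' h'), ⟨?_, ?_⟩, ?_⟩
    · apply hqV.1
      rw [q.comm_p]
      have e1 : q.fH (eR.symm (eR' h')) = q'.fH h' := eR.apply_symm_apply (eR' h')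
      rw [e1, ← q'.comm_p, hpv, hfV]
    · show eR'.symm (eR (eR.symm (eR' h'))) = h'
      rw [Equiv.apply_symm_apply, Equiv.symm_apply_apply]
    · rintro h2 ⟨hp2, hf2⟩
      have hf2' : eR'.symm (eR h2) = h' := hf2
      have h3 : eR h2 = eR' h' := (Equiv.symm_apply_eq eR').mp hf2'
      apply eR.injective
      rw [Equiv.apply_symm_apply]
      exact h3
  · intro a
    show q.fA a = q'.fA (factorA R R' hR fH a)
    by_cases ha : ∃ k, R.s k = a
    · obtain ⟨h, rfl⟩ := ha
      rw [factorA_s, q'.comm_s, hfH, ← q.comm_s]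
    · obtain ⟨k, hk⟩ := JK_port_aux hR ha
      rw [factorA_port R R' hR fH a ha k hk, q'.comm_i, q'.comm_s, hfH, ← q.comm_s,
        hk, q.comm_i, X.i_invol]
  · intro h
    show q.fH h = q'.fH (fH h)
    rw [hfH]
  · intro v
    show q.fV v = q'.fV (fV v)
    rw [hfV]

lemma comp_id (q : Etale R X) (q' : Etale R' X) (hR : NoIsolated R)
    (hqV : Function.Bijective q.fV) (m : Etale R R') (m' : Etale R' R)
    (hm : IsEComp m q' q) (hm' : IsEComp m' q q') :
    (∀ a, m'.fA (m.fA a) = a) ∧ (∀ h, m'.fH (m.fH h) = h) ∧ (∀ v, m'.fV (m.fV v) = v) := by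
  have hH : ∀ h, m'.fH (m.fH h) = h := by
    intro h
    apply fH_inj q hqV
    rw [← hm'.2.1, ← hm.2.1]
  refine ⟨?_, hH, ?_⟩
  · intro a
    rcases hR a with ⟨h, hk⟩ | ⟨h, hk⟩
    · rw [← hk, m.comm_s, m'.comm_s, hH]
    · have h1 : m'.fA (m.fA (R.i a)) = R.i a := by
        rw [← hk, m.comm_s, m'.comm_s, hH]
      rw [m.comm_i, m'.comm_i] at h1
      exact JK_i_inj R h1
  · intro v
    apply hqV.1
    rw [← hm'.2.2, ← hm.2.2]

end Aux

section CutGraph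

open Classical in
noncomputable def cutGraph (X : JKGraph) (S : Set X.A) (hSi : ∀ a ∈ S, X.i a ∈ S) :
    JKGraph where
  A := X.A ⊕ ↥S
  H := X.H
  V := X.V
  fintA := by haveI : Fintype ↥S := S.toFinite.fintype; infer_instance
  fintH := X.fintH
  fintV := X.fintV
  decA := Classical.decEq _
  decH := X.decH
  s h := Sum.inl (X.s h)
  p := X.p
  i a := Sum.elim (fun a => if h : a ∈ S then Sum.inr ⟨a, h⟩ else Sum.inl (X.i a))
    (fun b => Sum.inl b.1) a
  s_inj h1 h2 hh := X.s_inj (Sum.inl.inj hh)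
  i_invol a := by
    rcases a with a | ⟨a, ha⟩
    · by_cases h : a ∈ S
      · simp [h]
      · have h2 : X.i a ∉ S := fun hc => h (by simpa [X.i_invol] using hSi _ hc)
        simp [h, h2, X.i_invol]
    · simp [ha]
  i_nofix a := by
    rcases a with a | ⟨a, ha⟩
    · by_cases h : a ∈ S
      · simp [h]
      · simp [h, X.i_nofix a]
    · simp

open Classical in
theorem cutGraph_i_inl_mem (X : JKGraph) (S : Set X.A) (hSi : ∀ a ∈ S, X.i a ∈ S)
    (a : X.A) (h : a ∈ S) : (cutGraph X S hSi).i (Sum.inl a) = Sum.inr ⟨a, h⟩ := by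
  show (if h' : a ∈ S then (Sum.inr ⟨a, h'⟩ : X.A ⊕ ↥S) else Sum.inl (X.i a)) = _
  rw [dif_pos h]

open Classical in
theorem cutGraph_i_inl_not (X : JKGraph) (S : Set X.A) (hSi : ∀ a ∈ S, X.i a ∈ S)
    (a : X.A) (h : a ∉ S) : (cutGraph X S hSi).i (Sum.inl a) = Sum.inl (X.i a) := by
  show (if h' : a ∈ S then (Sum.inr ⟨a, h'⟩ : X.A ⊕ ↥S) else Sum.inl (X.i a)) = _
  rw [dif_neg h]

theorem cutGraph_i_inr (X : JKGraph) (S : Set X.A) (hSi : ∀ a ∈ S, X.i a ∈ S)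
    (b : ↥S) : (cutGraph X S hSi).i (Sum.inr b) = Sum.inl b.1 := rfl

theorem cutGraph_inl_range (X : JKGraph) (S : Set X.A) (hSi : ∀ a ∈ S, X.i a ∈ S)
    (a : X.A) : Sum.inl a ∈ Set.range (cutGraph X S hSi).s ↔ a ∈ Set.range X.s := by
  constructor
  · rintro ⟨k, hk⟩
    exact ⟨k, Sum.inl.inj hk⟩
  · rintro ⟨k, hk⟩
    exact ⟨k, congrArg Sum.inl hk⟩

theorem cutGraph_inr_range (X : JKGraph) (S : Set X.A) (hSi : ∀ a ∈ S, X.i a ∈ S)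
    (b : ↥S) : (Sum.inr b : X.A ⊕ ↥S) ∉ Set.range (cutGraph X S hSi).s := by
  rintro ⟨k, hk⟩
  exact Sum.inl_ne_inr hk

noncomputable def cutCover (X : JKGraph) (S : Set X.A) (hSi : ∀ a ∈ S, X.i a ∈ S) :
    Etale (cutGraph X S hSi) X where
  fA := Sum.elim id (fun b => X.i b.1)
  fH := id
  fV := id
  comm_s h := rfl
  comm_p h := rfl
  comm_i a := by
    rcases a with a | ⟨a, ha⟩
    · by_cases h : a ∈ S
      · rw [cutGraph_i_inl_mem X S hSi a h]
        rfl
      · rw [cutGraph_i_inl_not X S hSi a h]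
        rfl
    · rw [cutGraph_i_inr]
      show a = X.i (X.i a)
      rw [X.i_invol]
  pullback h' v hv := ⟨h', ⟨hv, rfl⟩, fun y hy => hy.2⟩

theorem cutCover_fA_inl (X : JKGraph) (S : Set X.A) (hSi : ∀ a ∈ S, X.i a ∈ S)
    (a : X.A) : (cutCover X S hSi).fA (Sum.inl a) = a := rfl

theorem cutCover_fA_inr (X : JKGraph) (S : Set X.A) (hSi : ∀ a ∈ S, X.i a ∈ S)
    (b : ↥S) : (cutCover X S hSi).fA (Sum.inr b) = X.i b.1 := rfl

end CutGraph
/-- For a JK graph `X` without isolated edges, the reduced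
covers of `X`, up to isomorphism over `X`, are in order-preserving bijection
with the (involution-invariant) subsets of inner arcs of `X`, i.e. with the
subsets of the set of inner edges of `X`; in particular they form a Boolean
lattice.  The bijection sends a reduced cover to the set of inner edges it
cuts; order-preservation says a factorisation over `X` exists precisely when
the cut sets are nested. -/
theorem reduced_covers_boolean_lattice (X : JKGraph) (hX : NoIsolated X) :
    (∀ (R R' : JKGraph) (q : Etale R X) (q' : Etale R' X),
      NoIsolated R → NoIsolated R' → IsReducedCover q → IsReducedCover q' →
      ((∃ e : Etale R R', Function.Bijective e.fA ∧ Function.Bijective e.fH ∧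
          Function.Bijective e.fV ∧ IsEComp e q' q) ↔ cutArcs q = cutArcs q')) ∧
    (∀ S : Set X.A, S ⊆ innerArcs X → (∀ a ∈ S, X.i a ∈ S) →
      ∃ (R : JKGraph) (q : Etale R X), NoIsolated R ∧ IsReducedCover q ∧
        cutArcs q = S) ∧
    (∀ (R R' : JKGraph) (q : Etale R X) (q' : Etale R' X),
      NoIsolated R → NoIsolated R' → IsReducedCover q → IsReducedCover q' →
      ((∃ m : Etale R R', IsEComp m q' q) ↔ cutArcs q' ⊆ cutArcs q)) := by
  refine ⟨?_, ?_, ?_⟩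
  · -- Part 1: isomorphism over X iff equal cut sets
    intro R R' q q' hR hR' hq hq'
    constructor
    · rintro ⟨e, heA, heH, heV, hcomp⟩
      apply Set.Subset.antisymm
      · rintro a ⟨hinner, b, hba, hbport⟩
        refine ⟨hinner, e.fA b, ?_, ?_⟩
        · rw [← hcomp.1]
          exact hba
        · rintro ⟨h', hh'⟩
          obtain ⟨h, rfl⟩ := heH.2 h'
          exact hbport ⟨h, heA.1 ((e.comm_s h).trans hh')⟩
      · rintro a ⟨hinner, b', hb'a, hb'port⟩
        obtain ⟨b, rfl⟩ := heA.2 b'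
        refine ⟨hinner, b, (hcomp.1 b).trans hb'a, ?_⟩
        rintro ⟨h, hh⟩
        exact hb'port ⟨e.fH h, by rw [← e.comm_s, hh]⟩
    · intro hcut
      obtain ⟨m, hm⟩ := exists_factor q q' hR hq hq' hcut.symm.subset
      obtain ⟨m', hm'⟩ := exists_factor q' q hR' hq' hq hcut.subset
      obtain ⟨hA1, hH1, hV1⟩ := comp_id q q' hR hq.1 m m' hm hm'
      obtain ⟨hA2, hH2, hV2⟩ := comp_id q' q hR' hq'.1 m' m hm' hm
      refine ⟨m, ⟨?_, fun y => ⟨m'.fA y, hA2 y⟩⟩, ⟨?_, fun y => ⟨m'.fH y, hH2 y⟩⟩,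
        ⟨?_, fun y => ⟨m'.fV y, hV2 y⟩⟩, hm⟩
      · intro x y hxy
        rw [← hA1 x, ← hA1 y, hxy]
      · intro x y hxy
        rw [← hH1 x, ← hH1 y, hxy]
      · intro x y hxy
        rw [← hV1 x, ← hV1 y, hxy]
  · -- Part 2: every involution-invariant subset of inner arcs is realized
    intro S hSsub hSi
    refine ⟨cutGraph X S hSi, cutCover X S hSi, ?_, ⟨Function.bijective_id,
      fun a => ⟨Sum.inl a, rfl⟩⟩, ?_⟩
    · intro b
      rcases b with a | ⟨a, ha⟩
      · by_cases h : a ∈ Set.range X.s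
        · exact Or.inl ((cutGraph_inl_range X S hSi a).2 h)
        · refine Or.inr ?_
          have haS : a ∉ S := fun hc => h (hSsub hc).1
          rw [cutGraph_i_inl_not X S hSi a haS]
          exact (cutGraph_inl_range X S hSi (X.i a)).2 ((hX a).resolve_left h)
      · refine Or.inr ?_
        rw [cutGraph_i_inr]
        exact (cutGraph_inl_range X S hSi a).2 (hSsub ha).1
    · ext x
      constructor
      · rintro ⟨hinner, b, hba, hbport⟩
        rcases b with a | ⟨a, ha⟩
        · exfalso
          rw [cutCover_fA_inl] at hba
          subst hba
          exact hbport ((cutGraph_inl_range X S hSi a).2 hinner.1)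
        · rw [cutCover_fA_inr] at hba
          have := hSi a ha
          rwa [hba] at this
      · intro hx
        refine ⟨hSsub hx, Sum.inr ⟨X.i x, hSi x hx⟩, ?_, cutGraph_inr_range X S hSi _⟩
        rw [cutCover_fA_inr]
        exact X.i_invol x
  · -- Part 3: factorization iff inclusion of cut sets
    intro R R' q q' hR hR' hq hq'
    constructor
    · rintro ⟨m, hm⟩
      exact cut_mono q q' hR' hq.1 hq'.1 m hm
    · exact exists_factor q q' hR hq hq'
end

section
/- Every reduced cover morphism R → R' of Joyal–Kock graphs is an epimorphism in the Kleisli category of the free compact-coloured-prop monad: any two Kleisli morphisms R' → Y that agree after precomposition with R → R' are equal. This follows because the induced functor el(R) → el(R') on categories of elements is surjective on objects. -/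
/-- An effective open subgraph of a JK graph `S`: a set of vertices and a set
of arcs, closed under the involution, containing the arcs of all flags of its
vertices, nonempty and with no isolated edges (effective). -/
structure OpenSub (S : JKGraph) where
  arcs : Set S.A
  verts : Set S.V
  i_closed : ∀ a ∈ arcs, S.i a ∈ arcs
  s_mem : ∀ h : S.H, S.p h ∈ verts → S.s h ∈ arcs
  verts_nonempty : verts.Nonempty
  no_isolated : ∀ a ∈ arcs, ∃ h : S.H, S.p h ∈ verts ∧ (S.s h = a ∨ S.s h = S.i a)

/-- A port of an open subgraph: an arc of the subgraph which is not the
emanating arc of any flag of the subgraph. -/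
def OpenSub.IsPort {S : JKGraph} (O : OpenSub S) (a : S.A) : Prop :=
  a ∈ O.arcs ∧ ¬ ∃ h : S.H, S.p h ∈ O.verts ∧ S.s h = a

/-- A Kleisli morphism `R → Y` for the free compact-coloured-prop monad, in
its diagrammatic description: arcs map to arcs (edges to edges), each vertex
maps to an effective open subgraph of `Y`, and each flag maps to the
corresponding port of the subgraph at its vertex, compatibly with the
structure maps; the flags of each vertex correspond bijectively to the ports
of its subgraph (matching interfaces). -/
structure KleisliHom (R Y : JKGraph) where
  fA : R.A → Y.A
  fH : R.H → Y.A
  fV : R.V → OpenSub Y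
  comm_i : ∀ a, fA (R.i a) = Y.i (fA a)
  comm_s : ∀ h, fA (R.s h) = Y.i (fH h)
  mem_port : ∀ h : R.H, (fV (R.p h)).IsPort (fH h)
  pullback : ∀ (v : R.V) (a : Y.A), (fV v).IsPort a → ∃! h : R.H, R.p h = v ∧ fH h = a

/-- A generic (refinement) Kleisli morphism: injective on arcs, every vertex
of the codomain lies in exactly one of the refining subgraphs, and the
morphism is bijective on ports (so the glued-up refinement is all of `Y`). -/
def IsGeneric {R Y : JKGraph} (k : KleisliHom R Y) : Prop :=
  Function.Injective k.fA ∧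
  (∀ w : Y.V, ∃! v : R.V, w ∈ (k.fV v).verts) ∧
  (∀ a ∈ R.ports, k.fA a ∈ Y.ports) ∧
  (∀ b ∈ Y.ports, ∃! a : R.A, a ∈ R.ports ∧ k.fA a = b)

/-- `IsKComp k l m` expresses that `m : R → Y` is the Kleisli composite of
`k : R → S` followed by `l : S → Y`: arcs compose, the flag/port data
composes, and the subgraph refining a vertex `v` is the union of the
subgraphs refining the vertices of the subgraph `k.fV v`, glued along the
images of its arcs. -/
def IsKComp {R S Y : JKGraph} (k : KleisliHom R S) (l : KleisliHom S Y)
    (m : KleisliHom R Y) : Prop :=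
  (∀ a, m.fA a = l.fA (k.fA a)) ∧
  (∀ h, m.fH h = l.fA (k.fH h)) ∧
  (∀ v, (m.fV v).verts = ⋃ w ∈ (k.fV v).verts, (l.fV w).verts) ∧
  (∀ v, (m.fV v).arcs = l.fA '' (k.fV v).arcs ∪ ⋃ w ∈ (k.fV v).verts, (l.fV w).arcs)

/-- `IsEtaleKleisli e k` expresses that the Kleisli morphism `k` is the free
morphism on the etale morphism `e` (each vertex is sent to the one-vertex
subgraph at its image). -/
def IsEtaleKleisli {R S : JKGraph} (e : Etale R S) (k : KleisliHom R S) : Prop :=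
  (∀ a, k.fA a = e.fA a) ∧
  (∀ h, k.fH h = S.i (S.s (e.fH h))) ∧
  (∀ v, (k.fV v).verts = {e.fV v})

/-- The identity Kleisli morphism (free on the identity etale morphism). -/
def IsIdKleisli {S : JKGraph} (k : KleisliHom S S) : Prop :=
  (∀ a, k.fA a = a) ∧ (∀ h, k.fH h = S.i (S.s h)) ∧ (∀ v, (k.fV v).verts = {v})

/-- The identity etale morphism. -/
def IsIdEtale {S : JKGraph} (e : Etale S S) : Prop :=
  (∀ a, e.fA a = a) ∧ (∀ h, e.fH h = h) ∧ (∀ v, e.fV v = v)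

/-- Every reduced cover `e : R → R'` is an epimorphism in
the (restricted) Kleisli category of the free compact-coloured-prop monad:
two Kleisli morphisms `R' → Y` that agree after precomposition with `e`
(levelwise, on arcs, flags and the refining subgraphs) are equal.  (This holds
because the induced functor `el(R) → el(R')` is surjective on objects.) -/
theorem reduced_cover_epi_in_Kleisli {R R' Y : JKGraph} (e : Etale R R')
    (he : IsReducedCover e) (k k' : KleisliHom R' Y)
    (hA : ∀ a, k.fA (e.fA a) = k'.fA (e.fA a))
    (hH : ∀ h, k.fH (e.fH h) = k'.fH (e.fH h))
    (hV : ∀ v, k.fV (e.fV v) = k'.fV (e.fV v)) :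
    k = k' := by
  have hHsurj : Function.Surjective e.fH := by
    intro h'
    obtain ⟨v, hv⟩ := he.1.2 (R'.p h')
    obtain ⟨h, ⟨_, hh2⟩, _⟩ := e.pullback h' v hv.symm
    exact ⟨h, hh2⟩
  obtain ⟨fA, fH, fV, _, _, _, _⟩ := k
  obtain ⟨fA', fH', fV', _, _, _, _⟩ := k'
  simp only [KleisliHom.mk.injEq]
  refine ⟨funext fun a => ?_, funext fun h => ?_, funext fun v => ?_⟩
  · obtain ⟨a0, rfl⟩ := he.2 a; exact hA a0
  · obtain ⟨h0, rfl⟩ := hHsurj h; exact hH h0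
  · obtain ⟨v0, rfl⟩ := he.1.2 v; exact hV v0
end
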